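/- Let M be a 2-dimensional submodule of F[x]^2 with minimal Gröbner basis {g_1, g_2} where g_2 has leading position 2. Then g_2 has minimal leading monomial among all elements of M with leading position 2, and every such minimal element f is of the form f = a_2 g_2 + a_1 g_1 with a_2 a nonzero scalar and a_1 ∈ F[x] satisfying lm(a_1 g_1) ≤ lm(g_2). -/

import Mathlib

open Polynomial

open scoped Classical

/-- Support of a polynomial vector: monomials `(degree, position)` ordered lexicographically,
which is the term-over-position (top) ordering. -/
noncomputable def vsupp {R : Type*} [CommRing R] {q : ℕ} (f : Fin q → R[X]) :
    Finset (Lex (ℕ × Fin q)) :=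
  Finset.univ.biUnion fun i => (f i).support.image fun α => toLex (α, i)

/-- Leading monomial w.r.t. the top ordering (`⊥` for the zero vector). -/
noncomputable def vlm {R : Type*} [CommRing R] {q : ℕ} (f : Fin q → R[X]) :
    WithBot (Lex (ℕ × Fin q)) := (vsupp f).max

/-- Degree of the leading monomial (junk value `0` for the zero vector). -/
noncomputable def vdeg {R : Type*} [CommRing R] {q : ℕ} (f : Fin q → R[X]) : ℕ :=
  WithBot.unbotD 0 ((vlm f).map fun m => (ofLex m).1)

/-- Leading position. -/
noncomputable def vlpos {R : Type*} [CommRing R] {q : ℕ} (f : Fin q → R[X]) : WithBot (Fin q) :=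
  (vlm f).map fun m => (ofLex m).2

/-- Leading coefficient. -/
noncomputable def vlc {R : Type*} [CommRing R] {q : ℕ} (f : Fin q → R[X]) : R :=
  WithBot.unbotD 0 ((vlm f).map fun m => (f (ofLex m).2).coeff (ofLex m).1)

/-- Leading term of a polynomial vector, as a polynomial vector. -/
noncomputable def vlt {R : Type*} [CommRing R] {q : ℕ} (f : Fin q → R[X]) : Fin q → R[X] :=
  WithBot.unbotD 0 ((vlm f).map fun m => fun j : Fin q =>
    if j = (ofLex m).2 then C ((f (ofLex m).2).coeff (ofLex m).1) * X ^ (ofLex m).1 else 0)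

/-- The leading term submodule `L(F)`. -/
noncomputable def ltSubmodule {R : Type*} [CommRing R] {q : ℕ} (S : Set (Fin q → R[X])) :
    Submodule R[X] (Fin q → R[X]) :=
  Submodule.span R[X] (vlt '' S)

/-- `G` is a Gröbner basis of `M`: `G ⊆ M` and `L(G) = L(M)`. -/
def IsGroebner {R : Type*} [CommRing R] {q : ℕ} (M : Submodule R[X] (Fin q → R[X]))
    (G : Finset (Fin q → R[X])) : Prop :=
  (G : Set (Fin q → R[X])) ⊆ M ∧
    ltSubmodule (G : Set (Fin q → R[X])) = ltSubmodule (M : Set (Fin q → R[X]))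

/-- One-step reduction of `f` to `h` modulo the finite set `Fs` (Adams–Loustaunau Def. 4.1.1). -/
def ReducesOneStep {R : Type*} [CommRing R] {q : ℕ} (Fs : Finset (Fin q → R[X]))
    (f h : Fin q → R[X]) : Prop :=
  f ≠ 0 ∧ ∃ (m : ℕ) (jv : Fin m → Fin q → R[X]) (α : Fin m → ℕ) (β : Fin m → R),
    0 < m ∧ (∀ i, jv i ∈ Fs) ∧ (∀ i, jv i ≠ 0) ∧ Function.Injective jv ∧ (∀ i, β i ≠ 0) ∧
    (∀ i, vlm f = (vlm (jv i)).map fun mm => toLex (α i + (ofLex mm).1, (ofLex mm).2)) ∧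
    vlt f = ∑ i, (C (β i) * X ^ α i) • vlt (jv i) ∧
    h = f - ∑ i, (C (β i) * X ^ α i) • jv i

/-- Minimal Gröbner basis: a Gröbner basis each of whose elements is irreducible
modulo the others. -/
def IsMinimalGroebner {R : Type*} [CommRing R] {q : ℕ} (M : Submodule R[X] (Fin q → R[X]))
    (G : Finset (Fin q → R[X])) : Prop :=
  IsGroebner M G ∧ ∀ g ∈ G, ∀ h, ¬ ReducesOneStep (G.erase g) g h

section Helpers
variable {F : Type*} [Field F] {q : ℕ}

lemma mem_vsupp {f : Fin q → F[X]} {a : ℕ} {i : Fin q} :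
    toLex (a, i) ∈ vsupp f ↔ (f i).coeff a ≠ 0 := by
  simp only [vsupp, Finset.mem_biUnion, Finset.mem_univ, true_and, Finset.mem_image,
    mem_support_iff]
  constructor
  · rintro ⟨j, α, hα, h⟩
    have h' : (α, j) = (a, i) := congrArg ofLex h
    rw [Prod.ext_iff] at h'
    obtain ⟨h1, h2⟩ := h'
    dsimp at h1 h2
    subst h1; subst h2
    exact hα
  · intro h; exact ⟨i, a, h, rfl⟩

lemma vlm_eq_bot_iff {f : Fin q → F[X]} : vlm f = ⊥ ↔ f = 0 := by
  rw [vlm, Finset.max_eq_bot]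
  constructor
  · intro h
    funext i
    by_contra hf
    obtain ⟨a, ha⟩ := Polynomial.support_nonempty.mpr (by simpa using hf)
    have : toLex (a, i) ∈ vsupp f := mem_vsupp.mpr (mem_support_iff.mp ha)
    simp [h] at this
  · intro h; subst h
    rw [Finset.eq_empty_iff_forall_notMem]
    intro m
    simp [vsupp]

lemma coeff_of_vlm {f : Fin q → F[X]} {d : ℕ} {j : Fin q}
    (h : vlm f = ((toLex (d, j) : Lex (ℕ × Fin q)) : WithBot (Lex (ℕ × Fin q)))) :
    (f j).coeff d ≠ 0 :=
  mem_vsupp.mp (Finset.mem_of_max h)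

lemma coeff_eq_zero_of_vlm_lt {f : Fin q → F[X]} {a : ℕ} {i : Fin q}
    (h : vlm f < ((toLex (a, i) : Lex (ℕ × Fin q)) : WithBot (Lex (ℕ × Fin q)))) :
    (f i).coeff a = 0 := by
  by_contra hc
  exact absurd h (not_lt.mpr (Finset.le_max (mem_vsupp.mpr hc)))

lemma vlm_lt_of_forall {f : Fin q → F[X]} {μ : Lex (ℕ × Fin q)}
    (h : ∀ a i, (f i).coeff a ≠ 0 → toLex (a, i) < μ) :
    vlm f < (μ : WithBot (Lex (ℕ × Fin q))) := by
  rcases hm : vlm f with _ | m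
  · exact WithBot.bot_lt_coe μ
  · have hmem : m ∈ vsupp f := Finset.mem_of_max hm
    have : toLex ((ofLex m).1, (ofLex m).2) ∈ vsupp f := by
      simpa using hmem
    exact WithBot.coe_lt_coe.mpr (by simpa using h _ _ (mem_vsupp.mp this))

lemma vlm_eq_of {f : Fin q → F[X]} {d : ℕ} {j : Fin q}
    (h1 : (f j).coeff d ≠ 0)
    (h2 : ∀ a i, toLex (d, j) < toLex (a, i) → (f i).coeff a = 0) :
    vlm f = ((toLex (d, j) : Lex (ℕ × Fin q)) : WithBot (Lex (ℕ × Fin q))) := by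
  refine le_antisymm (Finset.max_le_iff.mpr ?_) (Finset.le_max (mem_vsupp.mpr h1))
  intro m hm
  have hm' : toLex ((ofLex m).1, (ofLex m).2) ∈ vsupp f := by simpa using hm
  have hc := mem_vsupp.mp hm'
  rw [WithBot.coe_le_coe]
  by_contra hlt
  rw [not_le] at hlt
  have := h2 (ofLex m).1 (ofLex m).2 hlt
  exact hc this

lemma vlt_of_vlm {f : Fin q → F[X]} {d : ℕ} {j : Fin q}
    (h : vlm f = ((toLex (d, j) : Lex (ℕ × Fin q)) : WithBot (Lex (ℕ × Fin q)))) :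
    vlt f = fun i => if i = j then C ((f j).coeff d) * X ^ d else 0 := by
  simp [vlt, h]
  funext i; split_ifs <;> simp_all

lemma vlt_of_bot {f : Fin q → F[X]} (h : vlm f = ⊥) : vlt f = 0 := by
  simp [vlt, h]

lemma coeff_CXpow_mul (p : F[X]) (γ : F) (δ a : ℕ) :
    (C γ * X ^ δ * p).coeff a = if δ ≤ a then γ * p.coeff (a - δ) else 0 := by
  rw [mul_comm (C γ) (X ^ δ), mul_assoc, mul_comm (X ^ δ), coeff_mul_X_pow']
  split <;> simp [coeff_C_mul]

lemma vlm_monomial_smul {g : Fin q → F[X]} {e : ℕ} {j : Fin q} {γ : F} (hγ : γ ≠ 0)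
    (h : vlm g = ((toLex (e, j) : Lex (ℕ × Fin q)) : WithBot (Lex (ℕ × Fin q)))) (δ : ℕ) :
    vlm ((C γ * X ^ δ) • g)
      = ((toLex (δ + e, j) : Lex (ℕ × Fin q)) : WithBot (Lex (ℕ × Fin q))) ∧
    (((C γ * X ^ δ) • g) j).coeff (δ + e) = γ * (g j).coeff e := by
  have hcoeff : ∀ (i : Fin q) (a : ℕ),
      (((C γ * X ^ δ) • g) i).coeff a = if δ ≤ a then γ * (g i).coeff (a - δ) else 0 := by
    intro i a
    have : ((C γ * X ^ δ) • g) i = C γ * X ^ δ * g i := rfl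
    rw [this, coeff_CXpow_mul]
  have h2 : (((C γ * X ^ δ) • g) j).coeff (δ + e) = γ * (g j).coeff e := by
    rw [hcoeff]
    simp
  refine ⟨?_, h2⟩
  apply vlm_eq_of
  · rw [h2]
    exact mul_ne_zero hγ (coeff_of_vlm h)
  · intro a i hlt
    rw [hcoeff]
    split
    · rename_i hδa
      have : (g i).coeff (a - δ) = 0 := by
        apply coeff_eq_zero_of_vlm_lt
        rw [h, WithBot.coe_lt_coe, Prod.Lex.lt_iff]
        rw [Prod.Lex.lt_iff] at hlt
        rcases hlt with h' | ⟨h1, h2'⟩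
        · left; dsimp at *; omega
        · right; dsimp at *; constructor <;> [omega; exact h2']
      rw [this, mul_zero]
    · simp [Fin.sum_univ_one]

lemma vlm_sub_lt {f₁ f₂ : Fin q → F[X]} {d : ℕ} {j : Fin q}
    (h1 : vlm f₁ = ((toLex (d, j) : Lex (ℕ × Fin q)) : WithBot (Lex (ℕ × Fin q))))
    (h2 : vlm f₂ = ((toLex (d, j) : Lex (ℕ × Fin q)) : WithBot (Lex (ℕ × Fin q))))
    (hc : (f₁ j).coeff d = (f₂ j).coeff d) :
    vlm (f₁ - f₂) < ((toLex (d, j) : Lex (ℕ × Fin q)) : WithBot (Lex (ℕ × Fin q))) := by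
  apply vlm_lt_of_forall
  intro a i hne
  have hsub : (f₁ - f₂) i = f₁ i - f₂ i := rfl
  rw [hsub, coeff_sub, sub_ne_zero] at hne
  rcases lt_trichotomy (toLex (a, i)) (toLex (d, j)) with h | h | h
  · exact h
  · exfalso
    have ha : a = d ∧ i = j := by
      have := congrArg ofLex h
      rw [Prod.ext_iff] at this
      exact ⟨this.1, this.2⟩
    obtain ⟨ha, hi⟩ := ha; subst ha; subst hi
    exact hne hc
  · exfalso
    have z1 := coeff_eq_zero_of_vlm_lt (h1 ▸ WithBot.coe_lt_coe.mpr h)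
    have z2 := coeff_eq_zero_of_vlm_lt (h2 ▸ WithBot.coe_lt_coe.mpr h)
    rw [z1, z2] at hne
    exact hne rfl

lemma fin2_le (j : Fin 2) : j ≤ 1 := by fin_cases j <;> decide

lemma fin2_cases (j : Fin 2) : j = 0 ∨ j = 1 := by fin_cases j <;> simp

lemma vlm_repr {f : Fin q → F[X]} {m : Lex (ℕ × Fin q)} (h : vlm f = (m : WithBot (Lex (ℕ × Fin q)))) :
    vlm f = ((toLex ((ofLex m).1, (ofLex m).2) : Lex (ℕ × Fin q)) : WithBot (Lex (ℕ × Fin q))) := h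

lemma vlpos_of_vlm {f : Fin q → F[X]} {d : ℕ} {j : Fin q}
    (h : vlm f = ((toLex (d, j) : Lex (ℕ × Fin q)) : WithBot (Lex (ℕ × Fin q)))) :
    vlpos f = (j : WithBot (Fin q)) := by
  simp [vlpos, h]

lemma vlpos_elim {f : Fin q → F[X]} {j : Fin q} (h : vlpos f = (j : WithBot (Fin q))) :
    ∃ d, vlm f = ((toLex (d, j) : Lex (ℕ × Fin q)) : WithBot (Lex (ℕ × Fin q))) := by
  unfold vlpos at h
  rcases hm : vlm f with _ | m
  · rw [hm] at h
    simp only [WithBot.map, Option.map_none] at h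
    exact absurd h WithBot.bot_ne_coe
  · rw [hm] at h
    simp only [WithBot.map, Option.map_some] at h
    have h' : (ofLex m).2 = j := Option.some_inj.mp h
    subst h'
    exact ⟨(ofLex m).1, rfl⟩

lemma vlt_apply_self {f : Fin q → F[X]} {d : ℕ} {j : Fin q}
    (h : vlm f = ((toLex (d, j) : Lex (ℕ × Fin q)) : WithBot (Lex (ℕ × Fin q)))) :
    vlt f j = C ((f j).coeff d) * X ^ d := by
  rw [vlt_of_vlm h]; simp

lemma vlt_apply_ne {f : Fin q → F[X]} {d : ℕ} {j i : Fin q}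
    (h : vlm f = ((toLex (d, j) : Lex (ℕ × Fin q)) : WithBot (Lex (ℕ × Fin q))))
    (hij : i ≠ j) : vlt f i = 0 := by
  rw [vlt_of_vlm h]; simp [hij]

lemma ne_zero_of_vlm {f : Fin q → F[X]} {m : Lex (ℕ × Fin q)}
    (h : vlm f = (m : WithBot (Lex (ℕ × Fin q)))) : f ≠ 0 := by
  intro h0
  rw [h0, vlm_eq_bot_iff.mpr rfl] at h
  exact WithBot.bot_ne_coe h

lemma reduces_of_same_pos {Fs : Finset (Fin q → F[X])} {g h' : Fin q → F[X]} {d e : ℕ}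
    {j : Fin q}
    (hg : vlm g = ((toLex (d, j) : Lex (ℕ × Fin q)) : WithBot (Lex (ℕ × Fin q))))
    (hh : vlm h' = ((toLex (e, j) : Lex (ℕ × Fin q)) : WithBot (Lex (ℕ × Fin q))))
    (hle : e ≤ d) (hmem : h' ∈ Fs) :
    ∃ h2, ReducesOneStep Fs g h2 := by
  have hc₁ : (g j).coeff d ≠ 0 := coeff_of_vlm hg
  have hc₂ : (h' j).coeff e ≠ 0 := coeff_of_vlm hh
  set β : F := (g j).coeff d / (h' j).coeff e with hβ
  refine ⟨g - (C β * X ^ (d - e)) • h', ne_zero_of_vlm hg, 1, (fun _ => h'),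
    (fun _ => d - e), (fun _ => β), one_pos, (fun _ => hmem),
    (fun _ => ne_zero_of_vlm hh), (fun a b _ => Subsingleton.elim a b),
    (fun _ => div_ne_zero hc₁ hc₂), ?_, ?_, ?_⟩
  · intro _
    rw [hg, hh, WithBot.map_coe, WithBot.coe_inj]
    have : d - e + (ofLex (toLex (e, j))).1 = d := by
      simp only [ofLex_toLex]
      omega
    rw [this]
    simp [ofLex_toLex]
  · rw [Fin.sum_univ_one, vlt_of_vlm hg, vlt_of_vlm hh]
    funext i
    simp only [Pi.smul_apply, smul_eq_mul]
    by_cases hij : i = j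
    · rw [if_pos hij, if_pos hij, mul_mul_mul_comm, ← C_mul, hβ,
        div_mul_cancel₀ _ hc₂, ← pow_add, Nat.sub_add_cancel hle]
    · rw [if_neg hij, if_neg hij, mul_zero]
  · simp [Fin.sum_univ_one]

end Helpers

/-- Let `M ⊆ F[x]^2` be a 2-dimensional submodule with minimal Gröbner basis `{g₁, g₂}` where
`g₂` has leading position 2. Then `g₂` has minimal leading monomial among all elements of `M`
with leading position 2, and every such minimal element `f` has the form `f = a₂ g₂ + a₁ g₁`
with `a₂` a nonzero scalar and `lm (a₁ g₁) ≤ lm g₂`. -/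
theorem minimal_lpos_two_param {F : Type*} [Field F]
    (M : Submodule (Polynomial F) (Fin 2 → Polynomial F))
    (hrank : Module.rank (Polynomial F) ↥M = 2)
    (g₁ g₂ : Fin 2 → Polynomial F) (hne : g₁ ≠ g₂)
    (hGB : IsMinimalGroebner M ({g₁, g₂} : Finset (Fin 2 → Polynomial F)))
    (hpos : vlpos g₂ = ((1 : Fin 2) : WithBot (Fin 2))) :
    (∀ f, f ∈ M → f ≠ 0 → vlpos f = ((1 : Fin 2) : WithBot (Fin 2)) → vlm g₂ ≤ vlm f) ∧
    (∀ f, f ∈ M → f ≠ 0 → vlpos f = ((1 : Fin 2) : WithBot (Fin 2)) →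
      (∀ f', f' ∈ M → f' ≠ 0 → vlpos f' = ((1 : Fin 2) : WithBot (Fin 2)) → vlm f ≤ vlm f') →
      ∃ (a₂ : F) (a₁ : Polynomial F), a₂ ≠ 0 ∧ vlm (a₁ • g₁) ≤ vlm g₂ ∧
        f = (C a₂) • g₂ + a₁ • g₁) := by
  classical
  obtain ⟨d₂, hm2⟩ := vlpos_elim hpos
  have hc₂ : (g₂ 1).coeff d₂ ≠ 0 := coeff_of_vlm hm2
  have hg₂ne : g₂ ≠ 0 := ne_zero_of_vlm hm2
  have hg₁M : g₁ ∈ M := hGB.1.1 (by simp)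
  have hg₂M : g₂ ∈ M := hGB.1.1 (by simp)
  have hspan : ∀ f, f ∈ M →
      vlt f ∈ Submodule.span (Polynomial F) {vlt g₁, vlt g₂} := by
    intro f hf
    have h1 : vlt f ∈ ltSubmodule (M : Set (Fin 2 → Polynomial F)) :=
      Submodule.subset_span ⟨f, hf, rfl⟩
    rw [← hGB.1.2] at h1
    have hcoe : ((({g₁, g₂} : Finset (Fin 2 → Polynomial F))) : Set (Fin 2 → Polynomial F))
        = {g₁, g₂} := by simp
    rwa [ltSubmodule, hcoe, Set.image_pair] at h1
  -- g₁ cannot have leading position 1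
  have hstepA : ∀ d₁ : ℕ, vlm g₁ ≠
      ((toLex (d₁, (1 : Fin 2)) : Lex (ℕ × Fin 2)) : WithBot (Lex (ℕ × Fin 2))) := by
    intro d₁ hm1
    rcases le_total d₂ d₁ with hle | hle
    · have hmem : g₂ ∈ ({g₁, g₂} : Finset (Fin 2 → Polynomial F)).erase g₁ :=
        Finset.mem_erase.mpr ⟨Ne.symm hne, by simp⟩
      obtain ⟨h2, hred⟩ := reduces_of_same_pos hm1 hm2 hle hmem
      exact hGB.2 g₁ (by simp) _ hred
    · have hmem : g₁ ∈ ({g₁, g₂} : Finset (Fin 2 → Polynomial F)).erase g₂ :=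
        Finset.mem_erase.mpr ⟨hne, by simp⟩
      obtain ⟨h2, hred⟩ := reduces_of_same_pos hm2 hm1 hle hmem
      exact hGB.2 g₂ (by simp) _ hred
  have hvlt1 : vlt g₁ 1 = 0 := by
    rcases hm : vlm g₁ with _ | m
    · rw [vlt_of_bot hm]; rfl
    · have hm' := vlm_repr hm
      rcases fin2_cases (ofLex m).2 with hj | hj
      · rw [hj] at hm'
        exact vlt_apply_ne hm' (by decide)
      · exact absurd (hj ▸ hm') (hstepA (ofLex m).1)
  -- Part 1
  have part1 : ∀ f, f ∈ M → f ≠ 0 → vlpos f = ((1 : Fin 2) : WithBot (Fin 2)) →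
      vlm g₂ ≤ vlm f := by
    intro f hf hf0 hfp
    obtain ⟨d, hmf⟩ := vlpos_elim hfp
    obtain ⟨a, b, hab⟩ := Submodule.mem_span_pair.mp (hspan f hf)
    have h1 := congrArg (fun v => v (1 : Fin 2)) hab
    simp only [Pi.add_apply, Pi.smul_apply, smul_eq_mul] at h1
    rw [hvlt1, mul_zero, zero_add, vlt_apply_self hmf, vlt_apply_self hm2] at h1
    have h2 := congrArg (fun p => p.coeff d) h1
    rw [mul_comm b] at h2
    simp only [coeff_CXpow_mul] at h2
    have hRHS : (C ((f 1).coeff d) * X ^ d).coeff d = (f 1).coeff d := by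
      simp [coeff_C_mul, coeff_X_pow]
    rw [hRHS] at h2
    have hc : (f 1).coeff d ≠ 0 := coeff_of_vlm hmf
    by_cases hdd : d₂ ≤ d
    · rw [hm2, hmf, WithBot.coe_le_coe, Prod.Lex.le_iff]
      rcases eq_or_lt_of_le hdd with h | h
      · right; exact ⟨h, le_refl _⟩
      · left; exact h
    · rw [if_neg hdd] at h2
      exact absurd h2.symm hc
  -- Key induction: elements below vlm g₂ are multiples of g₁
  have keyA : ∀ n : ℕ, ∀ h : Fin 2 → Polynomial F, h ∈ M → vlm h < vlm g₂ →
      vlm h ≤ ((toLex (n, (1 : Fin 2)) : Lex (ℕ × Fin 2)) : WithBot (Lex (ℕ × Fin 2))) →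
      ∃ a : Polynomial F, h = a • g₁ := by
    intro n
    induction n using Nat.strong_induction_on with
    | _ n IH =>
      intro h hM hlt hbound
      rcases hm : vlm h with _ | m
      · exact ⟨0, by rw [vlm_eq_bot_iff.mp hm]; simp⟩
      · have hm' := vlm_repr hm
        have hne0 : h ≠ 0 := ne_zero_of_vlm hm
        rcases fin2_cases (ofLex m).2 with hj | hj
        · -- leading position 0
          set d := (ofLex m).1 with hd
          rw [hj] at hm'
          have hc : (h 0).coeff d ≠ 0 := coeff_of_vlm hm'
          obtain ⟨a, b, hab⟩ := Submodule.mem_span_pair.mp (hspan h hM)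
          have h1 := congrArg (fun v => v (0 : Fin 2)) hab
          simp only [Pi.add_apply, Pi.smul_apply, smul_eq_mul] at h1
          rw [vlt_apply_self hm', vlt_apply_ne hm2 (show (0 : Fin 2) ≠ 1 by decide),
            mul_zero, add_zero] at h1
          -- now case on vlm g₁
          rcases hm1 : vlm g₁ with _ | m₁
          · rw [vlt_of_bot hm1] at h1
            simp only [Pi.zero_apply, mul_zero] at h1
            have := congrArg (fun p => p.coeff d) h1
            simp [coeff_C_mul, coeff_X_pow] at this
            exact absurd this.symm hc
          · have hm1' := vlm_repr hm1
            rcases fin2_cases (ofLex m₁).2 with hj1 | hj1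
            · rw [hj1] at hm1'
              set e₁ := (ofLex m₁).1 with he₁
              have hc₁ : (g₁ 0).coeff e₁ ≠ 0 := coeff_of_vlm hm1'
              rw [vlt_apply_self hm1'] at h1
              rw [mul_comm a] at h1
              have h2 := congrArg (fun p => p.coeff d) h1
              simp only [coeff_CXpow_mul] at h2
              have hRHS : (C ((h 0).coeff d) * X ^ d).coeff d = (h 0).coeff d := by
                simp [coeff_C_mul, coeff_X_pow]
              rw [hRHS] at h2
              have he₁d : e₁ ≤ d := by
                by_contra hcon
                rw [if_neg hcon] at h2
                exact absurd h2.symm hc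
              set γ := (h 0).coeff d / (g₁ 0).coeff e₁ with hγ
              obtain ⟨hvm, hvc⟩ := vlm_monomial_smul (div_ne_zero hc hc₁) hm1' (d - e₁)
              rw [Nat.sub_add_cancel he₁d] at hvm hvc
              have hcoefeq : (h 0).coeff d
                  = (((C γ * X ^ (d - e₁)) • g₁) 0).coeff d := by
                rw [hvc, div_mul_cancel₀ _ hc₁]
              have hcancel := vlm_sub_lt hm' hvm hcoefeq
              set t := C γ * X ^ (d - e₁) with ht
              set h' := h - t • g₁ with hh'
              have hM' : h' ∈ M := M.sub_mem hM (M.smul_mem t hg₁M)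
              have hlth : vlm h' < vlm h := by rw [hm']; exact hcancel
              have hlt' : vlm h' < vlm g₂ := lt_trans hlth hlt
              rcases hm'' : vlm h' with _ | m''
              · refine ⟨t, ?_⟩
                have : h' = 0 := vlm_eq_bot_iff.mp hm''
                rw [hh', sub_eq_zero] at this
                exact this
              · have hd'' : (ofLex m'').1 < d := by
                  have hx : vlm h' < ((toLex (d, (0 : Fin 2)) : Lex (ℕ × Fin 2)) :
                      WithBot (Lex (ℕ × Fin 2))) := hcancel
                  rw [hm''] at hx
                  have hx' : toLex ((ofLex m'').1, (ofLex m'').2) < toLex (d, (0 : Fin 2)) :=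
                    WithBot.coe_lt_coe.mp hx
                  rw [Prod.Lex.lt_iff] at hx'
                  rcases hx' with h' | ⟨_, hcon⟩
                  · exact h'
                  · exact absurd hcon (by simp)
                have hdn : d ≤ n := by
                  have hx : ((toLex (d, (0 : Fin 2)) : Lex (ℕ × Fin 2)) : WithBot (Lex (ℕ × Fin 2)))
                      ≤ ((toLex (n, (1 : Fin 2)) : Lex (ℕ × Fin 2)) : WithBot (Lex (ℕ × Fin 2))) := by
                    rw [← hm']; exact hbound
                  rw [WithBot.coe_le_coe, Prod.Lex.le_iff] at hx
                  rcases hx with h' | ⟨h', _⟩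
                  · exact le_of_lt h'
                  · exact le_of_eq h'
                obtain ⟨a', ha'⟩ := IH (ofLex m'').1 (lt_of_lt_of_le hd'' hdn) h' hM' hlt'
                  (by
                    rw [hm'']
                    refine WithBot.coe_le_coe.mpr ?_
                    show toLex ((ofLex m'').1, (ofLex m'').2) ≤ toLex ((ofLex m'').1, 1)
                    rw [Prod.Lex.le_iff]
                    right
                    exact ⟨rfl, fin2_le _⟩)
                refine ⟨a' + t, ?_⟩
                rw [add_smul, ← ha', hh']
                ring
            · exact absurd (hj1 ▸ hm1') (hstepA (ofLex m₁).1)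
        · -- leading position 1 : contradiction with part 1
          rw [hj] at hm'
          have := part1 h hM hne0 (vlpos_of_vlm hm')
          exact absurd hlt (not_lt.mpr this)
  refine ⟨part1, ?_⟩
  intro f hf hf0 hfp hmin
  obtain ⟨d, hmf⟩ := vlpos_elim hfp
  have hvv : vlm f = vlm g₂ :=
    le_antisymm (hmin g₂ hg₂M hg₂ne (vlpos_of_vlm hm2)) (part1 f hf hf0 hfp)
  have hd : d = d₂ := by
    rw [hmf, hm2, WithBot.coe_inj] at hvv
    have := congrArg ofLex hvv
    rw [Prod.ext_iff] at this
    exact this.1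
  subst hd
  set a₂ := (f 1).coeff d / (g₂ 1).coeff d with ha₂def
  have hcf : (f 1).coeff d ≠ 0 := coeff_of_vlm hmf
  have ha₂ : a₂ ≠ 0 := div_ne_zero hcf hc₂
  obtain ⟨hvm, hvc⟩ := vlm_monomial_smul ha₂ hm2 0
  have hCX : (C a₂ * X ^ 0) = C a₂ := by rw [pow_zero, mul_one]
  rw [hCX, zero_add] at hvm hvc
  have hcoefeq : (f 1).coeff d = ((C a₂ • g₂) 1).coeff d := by
    rw [hvc, ha₂def, div_mul_cancel₀ _ hc₂]
  have hcancel := vlm_sub_lt hmf hvm hcoefeq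
  have hM' : f - C a₂ • g₂ ∈ M := M.sub_mem hf (M.smul_mem _ hg₂M)
  have hlt' : vlm (f - C a₂ • g₂) < vlm g₂ := by rw [hm2]; exact hcancel
  obtain ⟨a₁, ha₁⟩ : ∃ a₁ : Polynomial F, f - C a₂ • g₂ = a₁ • g₁ := by
    rcases hmm : vlm (f - C a₂ • g₂) with _ | mm
    · exact ⟨0, by rw [vlm_eq_bot_iff.mp hmm]; simp⟩
    · refine keyA (ofLex mm).1 _ hM' hlt' ?_
      rw [hmm]
      refine WithBot.coe_le_coe.mpr ?_
      show toLex ((ofLex mm).1, (ofLex mm).2) ≤ toLex ((ofLex mm).1, 1)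
      rw [Prod.Lex.le_iff]
      right
      exact ⟨rfl, fin2_le _⟩
  refine ⟨a₂, a₁, ha₂, ?_, ?_⟩
  · rw [← ha₁]
    exact le_of_lt hlt'
  · rw [← ha₁]
    ring
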